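/- Let n ≥ 1 and let σ : ℕ → 𝒫(P) be a trace. If σ, i ⊨ C_n, then σ, i ⊨ C=0 and, for every j ≥ i, σ, j ⊨ C=m where m is the unique element of {0,…,2ⁿ−1} with m ≡ j − i (mod 2ⁿ). -/

import Mathlib

/-! ### LTL on traces, and the binary-counter formula `C_n` -/

inductive LForm : Type where
  | var : ℕ → LForm
  | tru : LForm
  | neg : LForm → LForm
  | conj : LForm → LForm → LForm
  | next : LForm → LForm
  | until_ : LForm → LForm → LForm

abbrev Trace := ℕ → Set ℕ

/-- LTL satisfaction on a trace. -/
def TSat : LForm → Trace → ℕ → Prop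
  | .var p, σ, i => p ∈ σ i
  | .tru, _, _ => True
  | .neg a, σ, i => ¬ TSat a σ i
  | .conj a b, σ, i => TSat a σ i ∧ TSat b σ i
  | .next a, σ, i => TSat a σ (i + 1)
  | .until_ a b, σ, i =>
      ∃ i', i ≤ i' ∧ TSat b σ i' ∧ ∀ i'', i ≤ i'' → i'' < i' → TSat a σ i''

def LForm.impl (a b : LForm) : LForm := .neg (.conj a (.neg b))
def LForm.iffc (a b : LForm) : LForm := .conj (a.impl b) (b.impl a)
/-- `G φ := ¬(⊤ U ¬φ)`. -/
def LForm.G (a : LForm) : LForm := .neg (.until_ .tru (.neg a))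
def bigAndL (l : List LForm) : LForm := l.foldr .conj .tru
/-- The list `[a, a+1, …, b]`. -/
def listIccL (a b : ℕ) : List ℕ := (List.range (b + 1 - a)).map (fun k => a + k)

def allZeroL (n : ℕ) (pv : ℕ → ℕ) : LForm :=
  bigAndL ((listIccL 1 n).map (fun i => LForm.neg (LForm.var (pv i))))

def allOneL (n : ℕ) (pv : ℕ → ℕ) : LForm :=
  bigAndL ((listIccL 1 n).map (fun i => LForm.var (pv i)))

/-- The binary-counter formula `C_n` over the variables `p_i := pv i`,
`1 ≤ i ≤ n`, with `p₁` the most significant bit. -/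
def CnL (n : ℕ) (pv : ℕ → ℕ) : LForm :=
  LForm.conj (allZeroL n pv)
    (LForm.conj (LForm.G (LForm.impl (allOneL n pv) (LForm.next (allZeroL n pv))))
      (bigAndL ((listIccL 1 n).map (fun i =>
        LForm.G (LForm.impl
          (LForm.conj (LForm.neg (LForm.var (pv i)))
            (bigAndL ((listIccL (i + 1) n).map (fun i' => LForm.var (pv i')))))
          (LForm.conj
            (bigAndL ((listIccL (i + 1) n).map (fun i' => LForm.next (LForm.neg (LForm.var (pv i'))))))
            (LForm.conj (LForm.next (LForm.var (pv i)))
              (bigAndL ((listIccL 1 (i - 1)).map (fun i' =>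
                LForm.iffc (LForm.var (pv i')) (LForm.next (LForm.var (pv i')))))))))))))

open Classical in
/-- The counter value at position `i` of trace `σ`: the number whose `n`-bit
binary representation `b₁…b_n` (with `b₁` most significant) is given by
`b_j = 1` iff `pv j ∈ σ i`.  `σ, i ⊨ C=m` means `cvalL n pv σ i = m`. -/
noncomputable def cvalL (n : ℕ) (pv : ℕ → ℕ) (σ : Trace) (i : ℕ) : ℕ :=
  ∑ j ∈ Finset.Icc 1 n, if pv j ∈ σ i then 2 ^ (n - j) else 0

section Aux

lemma mem_listIccL {a b k : ℕ} : k ∈ listIccL a b ↔ a ≤ k ∧ k ≤ b := by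
  simp only [listIccL, List.mem_map, List.mem_range]
  constructor
  · rintro ⟨m, hm, rfl⟩; omega
  · rintro ⟨h1, h2⟩; exact ⟨k - a, by omega, by omega⟩

lemma tsat_bigAndL {l : List LForm} {σ : Trace} {i : ℕ} :
    TSat (bigAndL l) σ i ↔ ∀ a ∈ l, TSat a σ i := by
  induction l with
  | nil => simp [bigAndL, TSat]
  | cons hd tl ih =>
    have hcons : TSat (bigAndL (hd :: tl)) σ i ↔ TSat hd σ i ∧ TSat (bigAndL tl) σ i :=
      Iff.rfl
    rw [hcons, ih]
    simp

lemma tsat_G {a : LForm} {σ : Trace} {i : ℕ} :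
    TSat (LForm.G a) σ i ↔ ∀ j, i ≤ j → TSat a σ j := by
  show (¬ ∃ i', i ≤ i' ∧ (¬ TSat a σ i') ∧ ∀ i'', i ≤ i'' → i'' < i' → True) ↔ _
  constructor
  · intro h j hj
    by_contra hc
    exact h ⟨j, hj, hc, fun _ _ _ => trivial⟩
  · rintro h ⟨j, hj, hc, -⟩
    exact hc (h j hj)

lemma tsat_impl {a b : LForm} {σ : Trace} {i : ℕ} :
    TSat (a.impl b) σ i ↔ (TSat a σ i → TSat b σ i) := by
  show (¬ (TSat a σ i ∧ ¬ TSat b σ i)) ↔ _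
  tauto

lemma tsat_iffc {a b : LForm} {σ : Trace} {i : ℕ} :
    TSat (a.iffc b) σ i ↔ (TSat a σ i ↔ TSat b σ i) := by
  show (TSat (a.impl b) σ i ∧ TSat (b.impl a) σ i) ↔ _
  rw [tsat_impl, tsat_impl]
  tauto

lemma tsat_allZero {n : ℕ} {pv : ℕ → ℕ} {σ : Trace} {j : ℕ} :
    TSat (allZeroL n pv) σ j ↔ ∀ k, 1 ≤ k → k ≤ n → pv k ∉ σ j := by
  rw [allZeroL, tsat_bigAndL]
  constructor
  · intro h k h1 h2
    have := h _ (List.mem_map_of_mem (mem_listIccL.2 ⟨h1, h2⟩))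
    exact this
  · intro h a ha
    simp only [List.mem_map] at ha
    obtain ⟨k, hk, rfl⟩ := ha
    rw [mem_listIccL] at hk
    exact h k hk.1 hk.2

lemma tsat_allOne {n : ℕ} {pv : ℕ → ℕ} {σ : Trace} {j : ℕ} :
    TSat (allOneL n pv) σ j ↔ ∀ k, 1 ≤ k → k ≤ n → pv k ∈ σ j := by
  rw [allOneL, tsat_bigAndL]
  constructor
  · intro h k h1 h2
    exact h _ (List.mem_map_of_mem (mem_listIccL.2 ⟨h1, h2⟩))
  · intro h a ha
    simp only [List.mem_map] at ha
    obtain ⟨k, hk, rfl⟩ := ha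
    rw [mem_listIccL] at hk
    exact h k hk.1 hk.2

lemma sum_range_two_pow (n : ℕ) : ∑ m ∈ Finset.range n, 2^m = 2^n - 1 := by
  induction n with
  | zero => simp
  | succ m ih =>
    rw [Finset.sum_range_succ, ih, pow_succ]
    have : 1 ≤ 2^m := Nat.one_le_two_pow
    omega

lemma sum_pow (n : ℕ) : ∑ k ∈ Finset.Icc 1 n, 2^(n-k) = 2^n - 1 := by
  induction n with
  | zero => simp
  | succ m ih =>
    rw [Finset.sum_Icc_succ_top (by omega)]
    have h1 : ∑ k ∈ Finset.Icc 1 m, 2^(m+1-k) = ∑ k ∈ Finset.Icc 1 m, 2 * 2^(m-k) := by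
      apply Finset.sum_congr rfl
      intro k hk
      simp only [Finset.mem_Icc] at hk
      rw [← pow_succ']
      congr 1; omega
    rw [h1, ← Finset.mul_sum, ih]
    have : 1 ≤ 2^m := Nat.one_le_two_pow
    simp only [Nat.sub_self, pow_zero, pow_succ]
    omega

lemma sum_pow_Ioc (a n : ℕ) (h : a ≤ n) :
    ∑ k ∈ Finset.Ioc a n, 2^(n-k) = 2^(n-a) - 1 := by
  have hm : Finset.Ioc a n = Finset.map (addLeftEmbedding a) (Finset.Ioc 0 (n - a)) := by
    rw [Finset.map_add_left_Ioc]
    congr 1 <;> omega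
  rw [hm, Finset.sum_map]
  simp only [addLeftEmbedding_apply]
  have h2 : ∀ k ∈ Finset.Ioc 0 (n - a), 2^(n-(a+k)) = 2^((n-a)-k) := by
    intro k _; congr 1; omega
  rw [Finset.sum_congr rfl h2, ← Finset.Icc_add_one_left_eq_Ioc, zero_add, sum_pow]

lemma cval_le (n : ℕ) (pv : ℕ → ℕ) (σ : Trace) (j : ℕ) :
    cvalL n pv σ j ≤ 2^n - 1 := by
  rw [← sum_pow n, cvalL]
  apply Finset.sum_le_sum
  intro k _
  split <;> simp

lemma step (n : ℕ) (hn : 1 ≤ n) (pv : ℕ → ℕ) (σ : Trace) (j : ℕ)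
    (hG1 : (∀ k, 1 ≤ k → k ≤ n → pv k ∈ σ j) → ∀ k, 1 ≤ k → k ≤ n → pv k ∉ σ (j+1))
    (hG2 : ∀ i0, 1 ≤ i0 → i0 ≤ n → pv i0 ∉ σ j → (∀ k, i0 < k → k ≤ n → pv k ∈ σ j) →
      (∀ k, i0 < k → k ≤ n → pv k ∉ σ (j+1)) ∧ pv i0 ∈ σ (j+1) ∧
      ∀ k, 1 ≤ k → k < i0 → (pv k ∈ σ j ↔ pv k ∈ σ (j+1))) :
    cvalL n pv σ (j+1) = (cvalL n pv σ j + 1) % 2^n := by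
  classical
  by_cases hall : ∀ k, 1 ≤ k → k ≤ n → pv k ∈ σ j
  · have hz := hG1 hall
    have e1 : cvalL n pv σ j = 2^n - 1 := by
      rw [cvalL, ← sum_pow n]
      apply Finset.sum_congr rfl
      intro k hk
      simp only [Finset.mem_Icc] at hk
      rw [if_pos (hall k hk.1 hk.2)]
    have e2 : cvalL n pv σ (j+1) = 0 := by
      rw [cvalL]
      apply Finset.sum_eq_zero
      intro k hk
      simp only [Finset.mem_Icc] at hk
      rw [if_neg (hz k hk.1 hk.2)]
    rw [e1, e2]
    have h1 : 1 ≤ 2^n := Nat.one_le_two_pow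
    rw [Nat.sub_add_cancel h1, Nat.mod_self]
  · push_neg at hall
    obtain ⟨k0, hk01, hk0n, hk0⟩ := hall
    set S : Finset ℕ := (Finset.Icc 1 n).filter (fun k => pv k ∉ σ j) with hS
    have hne : S.Nonempty := ⟨k0, by simp [hS, Finset.mem_filter, Finset.mem_Icc]; exact ⟨⟨hk01, hk0n⟩, hk0⟩⟩
    set i0 := S.max' hne with hi0
    have hi0S : i0 ∈ S := S.max'_mem hne
    have hi0big : ∀ k ∈ S, k ≤ i0 := fun k hk => S.le_max' k hk
    simp only [hS, Finset.mem_filter, Finset.mem_Icc] at hi0S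
    obtain ⟨⟨h1i0, hi0n⟩, hbit0⟩ := hi0S
    have hones : ∀ k, i0 < k → k ≤ n → pv k ∈ σ j := by
      intro k hk1 hk2
      by_contra hc
      have : k ∈ S := by simp [hS, Finset.mem_filter, Finset.mem_Icc]; exact ⟨⟨by omega, hk2⟩, hc⟩
      have := hi0big k this
      omega
    obtain ⟨hpost0, hposti0, hlow⟩ := hG2 i0 h1i0 hi0n hbit0 hones
    -- split sums
    have hsplit : ∀ (j' : ℕ),
        cvalL n pv σ j' = (∑ k ∈ Finset.Ioc 0 (i0-1), (if pv k ∈ σ j' then 2^(n-k) else 0))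
          + (if pv i0 ∈ σ j' then 2^(n-i0) else 0)
          + (∑ k ∈ Finset.Ioc i0 n, (if pv k ∈ σ j' then 2^(n-k) else 0)) := by
      intro j'
      rw [cvalL, show Finset.Icc 1 n = Finset.Ioc 0 n from Finset.Icc_add_one_left_eq_Ioc 0 n]
      rw [← Finset.sum_Ioc_consecutive _ (Nat.zero_le i0) hi0n,
          ← Finset.sum_Ioc_consecutive _ (by omega : (0:ℕ) ≤ i0 - 1) (by omega : i0 - 1 ≤ i0)]
      have : Finset.Ioc (i0-1) i0 = {i0} := by
        ext x; simp [Finset.mem_Ioc]; omega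
      rw [this, Finset.sum_singleton]
    have elow : (∑ k ∈ Finset.Ioc 0 (i0-1), (if pv k ∈ σ (j+1) then 2^(n-k) else 0))
        = ∑ k ∈ Finset.Ioc 0 (i0-1), (if pv k ∈ σ j then 2^(n-k) else 0) := by
      apply Finset.sum_congr rfl
      intro k hk
      simp only [Finset.mem_Ioc] at hk
      have := hlow k (by omega) (by omega)
      by_cases hb : pv k ∈ σ j
      · rw [if_pos hb, if_pos (this.1 hb)]
      · rw [if_neg hb, if_neg (fun hc => hb (this.2 hc))]
    have ehigh1 : (∑ k ∈ Finset.Ioc i0 n, (if pv k ∈ σ (j+1) then 2^(n-k) else 0)) = 0 := by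
      apply Finset.sum_eq_zero
      intro k hk
      simp only [Finset.mem_Ioc] at hk
      rw [if_neg (hpost0 k hk.1 hk.2)]
    have ehigh2 : (∑ k ∈ Finset.Ioc i0 n, (if pv k ∈ σ j then 2^(n-k) else 0))
        = 2^(n-i0) - 1 := by
      rw [← sum_pow_Ioc i0 n hi0n]
      apply Finset.sum_congr rfl
      intro k hk
      simp only [Finset.mem_Ioc] at hk
      rw [if_pos (hones k hk.1 hk.2)]
    have hsucc : cvalL n pv σ (j+1) = cvalL n pv σ j + 1 := by
      rw [hsplit (j+1), hsplit j, elow, ehigh1, ehigh2, if_pos hposti0, if_neg hbit0]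
      have : 1 ≤ 2^(n-i0) := Nat.one_le_two_pow
      omega
    rw [hsucc]
    rw [Nat.mod_eq_of_lt]
    have := cval_le n pv σ (j+1)
    have h1 : 1 ≤ 2^n := Nat.one_le_two_pow
    omega

end Aux
/-- If `σ, i ⊨ C_n`, then `σ, i ⊨ C=0` and, for every
`j ≥ i`, `σ, j ⊨ C=m` where `m` is the unique element of `{0,…,2ⁿ−1}` with
`m ≡ j − i (mod 2ⁿ)`. -/
theorem stmt14 (n : ℕ) (hn : 1 ≤ n) (pv : ℕ → ℕ)
    (hinj : ∀ i ∈ Finset.Icc 1 n, ∀ j ∈ Finset.Icc 1 n, pv i = pv j → i = j)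
    (σ : Trace) (i : ℕ) (h : TSat (CnL n pv) σ i) :
    cvalL n pv σ i = 0 ∧ ∀ j, i ≤ j → cvalL n pv σ j = (j - i) % 2 ^ n := by
  obtain ⟨h1, h2, h3⟩ := h
  rw [tsat_allZero] at h1
  have hz : cvalL n pv σ i = 0 := by
    rw [cvalL]
    apply Finset.sum_eq_zero
    intro k hk
    simp only [Finset.mem_Icc] at hk
    rw [if_neg (h1 k hk.1 hk.2)]
  refine ⟨hz, ?_⟩
  rw [tsat_G] at h2
  have hG1 : ∀ j, i ≤ j → (∀ k, 1 ≤ k → k ≤ n → pv k ∈ σ j) →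
      ∀ k, 1 ≤ k → k ≤ n → pv k ∉ σ (j+1) := by
    intro j hj hall
    have hh := h2 j hj
    rw [tsat_impl] at hh
    exact tsat_allZero.1 (hh (tsat_allOne.2 hall))
  have hG2 : ∀ j, i ≤ j → ∀ i0, 1 ≤ i0 → i0 ≤ n → pv i0 ∉ σ j →
      (∀ k, i0 < k → k ≤ n → pv k ∈ σ j) →
      (∀ k, i0 < k → k ≤ n → pv k ∉ σ (j+1)) ∧ pv i0 ∈ σ (j+1) ∧
      ∀ k, 1 ≤ k → k < i0 → (pv k ∈ σ j ↔ pv k ∈ σ (j+1)) := by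
    intro j hj i0 h1i0 hi0n hb hon
    rw [tsat_bigAndL] at h3
    have hf := h3 _ (List.mem_map_of_mem (mem_listIccL.2 ⟨h1i0, hi0n⟩))
    rw [tsat_G] at hf
    have hf2 := hf j hj
    rw [tsat_impl] at hf2
    have hyp : TSat (LForm.conj (LForm.neg (LForm.var (pv i0)))
        (bigAndL ((listIccL (i0 + 1) n).map (fun i' => LForm.var (pv i'))))) σ j := by
      refine ⟨hb, tsat_bigAndL.2 ?_⟩
      intro a ha
      simp only [List.mem_map] at ha
      obtain ⟨k, hk, rfl⟩ := ha
      rw [mem_listIccL] at hk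
      exact hon k (by omega) hk.2
    obtain ⟨hA, hB, hC⟩ := hf2 hyp
    refine ⟨?_, hB, ?_⟩
    · intro k hk1 hk2
      have := tsat_bigAndL.1 hA _
        (List.mem_map_of_mem (mem_listIccL.2 ⟨by omega, hk2⟩))
      exact this
    · intro k hk1 hk2
      have := tsat_bigAndL.1 hC _
        (List.mem_map_of_mem (mem_listIccL.2 ⟨hk1, by omega⟩))
      exact tsat_iffc.1 this
  intro j hj
  induction j, hj using Nat.le_induction with
  | base => simpa using hz
  | succ m hm ih =>
    rw [step n hn pv σ m (hG1 m hm) (hG2 m hm), ih]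
    have h2n : 1 < 2^n := Nat.one_lt_two_pow_iff.2 (by omega)
    have he : m + 1 - i = (m - i) + 1 := by omega
    rw [he]
    conv_rhs => rw [Nat.add_mod, Nat.mod_eq_of_lt h2n]
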